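/- For each partition λ whose Young diagram is contained in the staircase shape sc_n = (n-1, n-2, ..., 1), there exists exactly one 132-avoiding permutation σ ∈ S_n whose Rothe diagram is the Young diagram of λ. -/

import Mathlib

/-- The adjacent transposition `s_a` (1-indexed letter `a`) acting on positions `Fin n`. -/
def adjT (n a : ℕ) : Equiv.Perm (Fin n) :=
  if h : 1 ≤ a ∧ a < n then Equiv.swap ⟨a - 1, by omega⟩ ⟨a, h.2⟩ else 1

/-- The permutation `s_{w_1} ∘ s_{w_2} ∘ ⋯ ∘ s_{w_m}` of a word, transpositions acting on
positions composed from the left (`s_{w_1}` applied first to the identity). -/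
def permOfWord (n : ℕ) (w : List ℕ) : Equiv.Perm (Fin n) :=
  (w.map (adjT n)).prod

/-- The set of inversions of a permutation. -/
def invSet {n : ℕ} (σ : Equiv.Perm (Fin n)) : Set (Fin n × Fin n) :=
  {p | p.1 < p.2 ∧ σ p.2 < σ p.1}

/-- The number of inversions. -/
noncomputable def invNum {n : ℕ} (σ : Equiv.Perm (Fin n)) : ℕ := (invSet σ).ncard

/-- `w` is a reduced word for `σ`: letters in `[n-1]`, the product of the corresponding
adjacent transpositions is `σ`, and the length is `inv σ`. -/
def IsReducedWord (n : ℕ) (σ : Equiv.Perm (Fin n)) (w : List ℕ) : Prop :=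
  (∀ a ∈ w, 1 ≤ a ∧ a < n) ∧ permOfWord n w = σ ∧ w.length = invNum σ

/-- `σ` avoids the pattern 132. -/
def Avoids132 {n : ℕ} (σ : Equiv.Perm (Fin n)) : Prop :=
  ¬ ∃ i1 i2 i3 : Fin n, i1 < i2 ∧ i2 < i3 ∧ σ i1 < σ i3 ∧ σ i3 < σ i2

/-- `σ` avoids the pattern 312. -/
def Avoids312 {n : ℕ} (σ : Equiv.Perm (Fin n)) : Prop :=
  ¬ ∃ i1 i2 i3 : Fin n, i1 < i2 ∧ i2 < i3 ∧ σ i2 < σ i3 ∧ σ i3 < σ i1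

/-- The Rothe diagram of `σ` (permutation matrix with 1s at `(σ i, i)`, 0-indexed):
cells strictly north of the 1 in their column and strictly west of the 1 in their row. -/
def rothe {n : ℕ} (σ : Equiv.Perm (Fin n)) : Set (Fin n × Fin n) :=
  {p | p.1 < σ p.2 ∧ p.2 < σ.symm p.1}

/-- Two cells are adjacent if they share an edge. -/
def adjCell {n : ℕ} (p q : Fin n × Fin n) : Prop :=
  (p.1 = q.1 ∧ ((p.2 : ℕ) + 1 = q.2 ∨ (q.2 : ℕ) + 1 = p.2)) ∨
  (p.2 = q.2 ∧ ((p.1 : ℕ) + 1 = q.1 ∨ (q.1 : ℕ) + 1 = p.1))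

/-- The connected component of the Rothe diagram containing the (0-indexed) cell `(0,0)`,
empty if `(0,0)` is not in the diagram. -/
def comp11 {n : ℕ} (σ : Equiv.Perm (Fin n)) : Set (Fin n × Fin n) :=
  {p | ∃ h0 : 0 < n,
    Relation.ReflTransGen (fun a b => a ∈ rothe σ ∧ b ∈ rothe σ ∧ adjCell a b)
      (⟨⟨0, h0⟩, ⟨0, h0⟩⟩) p ∧
    p ∈ rothe σ ∧ ((⟨⟨0, h0⟩, ⟨0, h0⟩⟩ : Fin n × Fin n)) ∈ rothe σ}

/-- Edelman–Greene insertion of `x` into a single (strictly increasing) row: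
returns the new row and the optional entry bumped into the next row. -/
def insRow (x : ℕ) : List ℕ → List ℕ × Option ℕ
  | [] => ([x], none)
  | z :: zs =>
    if z < x then
      let r := insRow x zs
      (z :: r.1, r.2)
    else if z = x then (z :: zs, some (z + 1))
    else (x :: zs, some z)

/-- Edelman–Greene insertion of `x` into a tableau (list of rows). -/
def insTab (x : ℕ) : List (List ℕ) → List (List ℕ)
  | [] => [[x]]
  | r :: rs =>
    let p := insRow x r
    match p.2 with
    | none => p.1 :: rs
    | some y => p.1 :: insTab y rs

/-- The Edelman–Greene insertion tableau `P(w)`. -/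
def Ptab (w : List ℕ) : List (List ℕ) := w.foldl (fun t x => insTab x t) []

/-- Add the label `k` to the recording tableau `q` at the unique new cell of shape `p`. -/
def recordCell (k : ℕ) : List (List ℕ) → List (List ℕ) → List (List ℕ)
  | _, [] => []
  | [], _ :: _ => [[k]]
  | q :: qs, p :: ps =>
    if q.length < p.length then (q ++ [k]) :: qs else q :: recordCell k qs ps

/-- The Edelman–Greene recording tableau `Q(w) = EG(w)`. -/
def Qtab (w : List ℕ) : List (List ℕ) :=
  (w.foldl (fun pq x =>
      let P' := insTab x pq.1
      (P', recordCell (pq.2.flatten.length + 1) pq.2 P'))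
    (([], []) : List (List ℕ) × List (List ℕ))).2

/-- A tableau is frozen if the cell in (0-indexed) row `i`, column `j` contains `i + j + 1`. -/
def Frozen (P : List (List ℕ)) : Prop :=
  ∀ i j, i < P.length → j < (P.getD i []).length → (P.getD i []).getD j 0 = i + j + 1

/-- All rows strictly increasing. -/
def RowStrict (P : List (List ℕ)) : Prop := ∀ r ∈ P, List.Pairwise (· < ·) r

/-- All columns strictly increasing. -/
def ColStrict (P : List (List ℕ)) : Prop :=
  ∀ i j, i + 1 < P.length → j < (P.getD (i + 1) []).length →
    (P.getD i []).getD j 0 < (P.getD (i + 1) []).getD j 0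

/-- Valid Young-diagram shape: nonempty rows of weakly decreasing lengths. -/
def TabShape (P : List (List ℕ)) : Prop :=
  (∀ r ∈ P, r ≠ []) ∧ ∀ i, i + 1 < P.length → (P.getD (i + 1) []).length ≤ (P.getD i []).length

/-- The reading word: rows left to right, from the bottom row up. -/
def readingWord (P : List (List ℕ)) : List ℕ := P.reverse.flatten

/-- A standard Young tableau: valid shape, strictly increasing rows and columns, and the
entries are `1, …, N` each exactly once. -/
def IsStandard (Q : List (List ℕ)) : Prop :=
  TabShape Q ∧ RowStrict Q ∧ ColStrict Q ∧ Q.flatten.Perm (List.range' 1 Q.flatten.length)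

/-- `Q` has the staircase shape `sc_n = (n-1, n-2, …, 1)`. -/
def StaircaseShape (n : ℕ) (Q : List (List ℕ)) : Prop :=
  Q.length = n - 1 ∧ ∀ i, i < n - 1 → (Q.getD i []).length = n - 1 - i

/-- A sorting network: a reduced word of the reverse permutation in `S_n`. -/
def IsSortingNetwork (n : ℕ) (w : List ℕ) : Prop :=
  IsReducedWord n Fin.revPerm w

/-- Every intermediate permutation of the word avoids 132. -/
def Avoiding132 (n : ℕ) (w : List ℕ) : Prop :=
  ∀ k, k ≤ w.length → Avoids132 (permOfWord n (w.take k))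

/-- Every intermediate permutation of the word avoids 312. -/
def Avoiding312 (n : ℕ) (w : List ℕ) : Prop :=
  ∀ k, k ≤ w.length → Avoids312 (permOfWord n (w.take k))

/-- `c` is the column word of `Q`: its `k`-th letter (1-indexed) is the (1-indexed) column
of the entry `k` in `Q`. -/
def IsColumnWord (Q : List (List ℕ)) (c : List ℕ) : Prop :=
  c.length = Q.flatten.length ∧
  ∀ k, k < c.length → ∃ i j, i < Q.length ∧ j < (Q.getD i []).length ∧
    (Q.getD i []).getD j 0 = k + 1 ∧ c.getD k 0 = j + 1

/-- All anti-diagonals of `Q` increase downwards: `Q_{i,j} > Q_{i-1,j+1}` (1-indexed). -/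
def AntiDiagDown (Q : List (List ℕ)) : Prop :=
  ∀ i j, i + 1 < Q.length → j < (Q.getD (i + 1) []).length → j + 1 < (Q.getD i []).length →
    (Q.getD i []).getD (j + 1) 0 < (Q.getD (i + 1) []).getD j 0

/-! ### Auxiliary development for Statement 3 -/

theorem aux_le_foldr_max (L : List ℕ) (m : ℕ) (h : m ∈ L) : m ≤ L.foldr max 0 := by
  induction L with
  | nil => simp at h
  | cons a t ih =>
    rcases List.mem_cons.mp h with rfl | h
    · exact le_max_left _ _
    · exact le_trans (ih h) (le_max_right _ _)

theorem aux_exists_fresh (L : List ℕ) (b : ℕ) : ∃ m, b ≤ m ∧ m ∉ L :=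
  ⟨b + L.foldr max 0 + 1, by omega, fun h => by have := aux_le_foldr_max L _ h; omega⟩

/-- The least `m ≥ b` not in `L`. -/
def auxFresh (L : List ℕ) (b : ℕ) : ℕ := Nat.find (aux_exists_fresh L b)

theorem auxFresh_ge (L : List ℕ) (b : ℕ) : b ≤ auxFresh L b := (Nat.find_spec (aux_exists_fresh L b)).1

theorem auxFresh_not_mem (L : List ℕ) (b : ℕ) : auxFresh L b ∉ L :=
  (Nat.find_spec (aux_exists_fresh L b)).2

theorem aux_mem_of_lt_fresh {L : List ℕ} {b m : ℕ} (h1 : b ≤ m) (h2 : m < auxFresh L b) :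
    m ∈ L := by
  have := Nat.find_min (aux_exists_fresh L b) h2
  push_neg at this
  exact this h1

theorem auxFresh_le {L : List ℕ} {b m : ℕ} (h1 : b ≤ m) (h2 : m ∉ L) : auxFresh L b ≤ m :=
  Nat.find_le ⟨h1, h2⟩

theorem auxFresh_le_add (L : List ℕ) (b : ℕ) (hnd : L.Nodup) : auxFresh L b ≤ b + L.length := by
  by_contra h
  push_neg at h
  have hsub : Finset.Icc b (b + L.length) ⊆ L.toFinset := by
    intro m hm
    rw [Finset.mem_Icc] at hm
    rw [List.mem_toFinset]
    exact aux_mem_of_lt_fresh hm.1 (lt_of_le_of_lt hm.2 h)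
  have hc := Finset.card_le_card hsub
  rw [Nat.card_Icc, List.toFinset_card_of_nodup hnd] at hc
  omega

/-- The list of the first `r` values of the greedy permutation. -/
def auxWl (lam : ℕ → ℕ) : ℕ → List ℕ
  | 0 => []
  | r + 1 => auxWl lam r ++ [auxFresh (auxWl lam r) (lam r)]

/-- The greedy permutation value at `r`: least unused value `≥ lam r`. -/
def auxW (lam : ℕ → ℕ) (r : ℕ) : ℕ := auxFresh (auxWl lam r) (lam r)

theorem aux_mem_wl {lam : ℕ → ℕ} {r m : ℕ} : m ∈ auxWl lam r ↔ ∃ s < r, auxW lam s = m := by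
  induction r with
  | zero => simp [auxWl]
  | succ r ih =>
    simp only [auxWl, List.mem_append, List.mem_singleton, ih]
    constructor
    · rintro (⟨s, hs, h⟩ | rfl)
      · exact ⟨s, by omega, h⟩
      · exact ⟨r, by omega, rfl⟩
    · rintro ⟨s, hs, h⟩
      rcases Nat.lt_succ_iff_lt_or_eq.mp hs with hs | rfl
      · exact Or.inl ⟨s, hs, h⟩
      · exact Or.inr h.symm

theorem aux_wl_nodup (lam : ℕ → ℕ) (r : ℕ) : (auxWl lam r).Nodup := by
  induction r with
  | zero => simp [auxWl]
  | succ r ih =>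
    simp only [auxWl, List.nodup_append, List.nodup_singleton, List.disjoint_singleton]
    exact ⟨ih, trivial, fun a ha b hb hab => auxFresh_not_mem _ _ (by simp at hb; subst hb; exact hab ▸ ha)⟩

theorem aux_wl_length (lam : ℕ → ℕ) (r : ℕ) : (auxWl lam r).length = r := by
  induction r with
  | zero => rfl
  | succ r ih => simp [auxWl, ih]

theorem auxW_ge (lam : ℕ → ℕ) (r : ℕ) : lam r ≤ auxW lam r := auxFresh_ge _ _

theorem auxW_ne {lam : ℕ → ℕ} {s r : ℕ} (h : s < r) : auxW lam s ≠ auxW lam r := by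
  intro heq
  exact auxFresh_not_mem (auxWl lam r) (lam r) (aux_mem_wl.mpr ⟨s, h, heq⟩)

theorem auxW_exists_of_lt {lam : ℕ → ℕ} {r m : ℕ} (h1 : lam r ≤ m) (h2 : m < auxW lam r) :
    ∃ s < r, auxW lam s = m :=
  aux_mem_wl.mp (aux_mem_of_lt_fresh h1 h2)

theorem auxW_le_add (lam : ℕ → ℕ) (r : ℕ) : auxW lam r ≤ lam r + r := by
  have := auxFresh_le_add (auxWl lam r) (lam r) (aux_wl_nodup lam r)
  rwa [aux_wl_length] at this

theorem auxW_min {lam : ℕ → ℕ} {r m : ℕ} (h1 : lam r ≤ m)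
    (h2 : ∀ s < r, auxW lam s ≠ m) : auxW lam r ≤ m := by
  refine auxFresh_le h1 ?_
  intro hm
  obtain ⟨s, hs, h⟩ := aux_mem_wl.mp hm
  exact h2 s hs h

/-- for each partition `λ` contained in the staircase `sc_n`, there is exactly
one 132-avoiding permutation of `[n]` whose Rothe diagram is the Young diagram of `λ`. -/
theorem existsUnique_avoids132_of_partition (n : ℕ) (lam : Fin n → ℕ)
    (hdec : ∀ i j : Fin n, i ≤ j → lam j ≤ lam i)
    (hstair : ∀ i : Fin n, lam i ≤ n - 1 - (i : ℕ)) :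
    ∃! σ : Equiv.Perm (Fin n), Avoids132 σ ∧
      rothe σ = {p : Fin n × Fin n | (p.2 : ℕ) < lam p.1} := by
  classical
  set lamN : ℕ → ℕ := fun r => if h : r < n then lam ⟨r, h⟩ else 0 with hlamN
  have hlam_eq : ∀ r : Fin n, lamN (r : ℕ) = lam r := by
    intro r; simp [hlamN, r.2]
  have hmono : ∀ s r : ℕ, s ≤ r → r < n → lamN r ≤ lamN s := by
    intro s r hsr hrn
    have hsn : s < n := lt_of_le_of_lt hsr hrn
    simp only [hlamN, dif_pos hrn, dif_pos hsn]
    exact hdec ⟨s, hsn⟩ ⟨r, hrn⟩ hsr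
  have hstairN : ∀ r, r < n → lamN r + r < n := by
    intro r hr
    have hv : lam ⟨r, hr⟩ ≤ n - 1 - r := hstair ⟨r, hr⟩
    simp only [hlamN, dif_pos hr]
    omega
  have hw_lt : ∀ r, r < n → auxW lamN r < n := by
    intro r hr
    have h1 := auxW_le_add lamN r
    have h2 := hstairN r hr
    omega
  set wF : Fin n → Fin n := fun r => ⟨auxW lamN r, hw_lt r r.2⟩ with hwF
  have hinj : Function.Injective wF := by
    intro a b hab
    by_contra hne
    have h : (auxW lamN a : ℕ) = auxW lamN b := congrArg Fin.val hab
    rcases Ne.lt_or_gt (fun h' : a = b => hne h') with h' | h'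
    · exact auxW_ne (show (a : ℕ) < b from h') h
    · exact auxW_ne (show (b : ℕ) < a from h') h.symm
  set e : Equiv.Perm (Fin n) := Equiv.ofBijective wF (Finite.injective_iff_bijective.mp hinj)
    with he
  have heval : ∀ r : Fin n, e r = wF r := fun r => rfl
  have hesymm : ∀ r : Fin n, e.symm (wF r) = r := fun r => e.symm_apply_apply r
  -- value of e.symm: e.symm c = s ↔ wF s = c
  have hsymm_eq : ∀ (c s : Fin n), e.symm c = s ↔ wF s = c := by
    intro c s
    constructor
    · rintro rfl; exact e.apply_symm_apply c
    · rintro rfl; exact hesymm s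
  refine ⟨e.symm, ⟨?_, ?_⟩, ?_⟩
  · -- Avoids132
    rintro ⟨i1, i2, i3, h12, h23, hv13, hv32⟩
    -- positions in w
    set a := e.symm i1
    set b := e.symm i3
    set c := e.symm i2
    have ha : wF a = i1 := e.apply_symm_apply i1
    have hb : wF b = i3 := e.apply_symm_apply i3
    have hc : wF c = i2 := e.apply_symm_apply i2
    -- a < b < c in positions?  values: i1 < i3 < i2, i.e. wF a < wF b... reorder:
    -- We have positions: (e.symm i1) (e.symm i2) (e.symm i3) with values i1 i2 i3.
    -- indices i1 < i2 < i3 means positions a,c,b carry increasing values? No: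
    -- σ = e.symm : position ↦ value?  Here σ i = e.symm i, σ.symm = e.
    -- In the pattern: i1<i2<i3 are positions, values σ i1 < σ i3 < σ i2.
    -- So a = σ i1, etc. values of w at rows a := σ i1 : w a = i1.
    have hab : a < b := hv13
    have hbc : b < c := hv32
    have h1 : (wF a : ℕ) < wF b := by rw [ha, hb]; exact Fin.lt_def.mp (lt_trans h12 h23)
    have h2 : (wF c : ℕ) < wF b := by rw [hc, hb]; exact Fin.lt_def.mp h23
    have h3 : (wF a : ℕ) < wF c := by rw [ha, hc]; exact Fin.lt_def.mp h12
    -- positions a < b < c, values w a < w c < w b : the 132 pattern in w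
    have hclam : (wF c : ℕ) < lamN (b : ℕ) := by
      by_contra hge
      push_neg at hge
      obtain ⟨s, hs, hsval⟩ := auxW_exists_of_lt hge h2
      have hsn : s < n := lt_trans hs b.2
      have : wF ⟨s, hsn⟩ = wF c := Fin.ext hsval
      have : (⟨s, hsn⟩ : Fin n) = c := hinj this
      have : (c : ℕ) = s := by rw [← this]
      omega
    have h4 : lamN (b : ℕ) ≤ lamN (a : ℕ) := hmono _ _ (le_of_lt (Fin.lt_def.mp hab)) b.2
    have h5 : lamN (a : ℕ) ≤ auxW lamN (a : ℕ) := auxW_ge _ _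
    have h6 : (wF a : ℕ) = auxW lamN (a : ℕ) := rfl
    omega
  · -- rothe e.symm = target
    ext ⟨r, c⟩
    simp only [rothe, Set.mem_setOf_eq, Equiv.symm_symm]
    constructor
    · rintro ⟨h1, h2⟩
      -- h1 : r < e.symm c, h2 : c < e r = wF r
      rw [heval r] at h2
      have h2' : (c : ℕ) < auxW lamN (r : ℕ) := h2
      rw [← hlam_eq r]
      by_contra hge
      push_neg at hge
      obtain ⟨s, hs, hsval⟩ := auxW_exists_of_lt hge h2'
      have hsn : s < n := lt_trans hs r.2
      have hwc : wF ⟨s, hsn⟩ = c := Fin.ext hsval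
      have : e.symm c = ⟨s, hsn⟩ := (hsymm_eq c ⟨s, hsn⟩).mpr hwc
      rw [this] at h1
      have : (r : ℕ) < s := h1
      omega
    · intro hcl
      rw [← hlam_eq r] at hcl
      constructor
      · -- r < e.symm c
        set s := e.symm c with hs
        have hws : wF s = c := e.apply_symm_apply c
        have hwsv : auxW lamN (s : ℕ) = (c : ℕ) := congrArg Fin.val hws
        by_contra hle
        push_neg at hle
        -- s ≤ r
        have hsr : (s : ℕ) ≤ r := hle
        have h1 : lamN (r : ℕ) ≤ lamN (s : ℕ) := hmono _ _ hsr r.2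
        have h2 : lamN (s : ℕ) ≤ auxW lamN (s : ℕ) := auxW_ge _ _
        omega
      · -- c < e r
        rw [heval r]
        have : lamN (r : ℕ) ≤ auxW lamN (r : ℕ) := auxW_ge _ _
        exact show (c : ℕ) < auxW lamN (r : ℕ) by omega
  · -- uniqueness
    rintro σ' ⟨_, hrothe⟩
    have key : ∀ r : ℕ, ∀ hr : r < n, σ'.symm ⟨r, hr⟩ = wF ⟨r, hr⟩ := by
      intro r
      induction r using Nat.strong_induction_on with
      | _ r IH =>
        intro hr
        set i : ℕ := (σ'.symm ⟨r, hr⟩ : ℕ) with hi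
        have hcond : ∀ cc : Fin n,
            ((⟨r, hr⟩ : Fin n) < σ' cc ∧ (cc : ℕ) < i) ↔ (cc : ℕ) < lamN r := by
          intro cc
          have := Set.ext_iff.mp hrothe (⟨r, hr⟩, cc)
          simp only [rothe, Set.mem_setOf_eq] at this
          rw [← hlam_eq ⟨r, hr⟩] at this
          exact this
        -- (a) lamN r ≤ i
        have ha : lamN r ≤ i := by
          rcases Nat.eq_zero_or_pos (lamN r) with h0 | h0
          · omega
          · have hlt : lamN r - 1 < n := by have := hstairN r hr; omega
            have := (hcond ⟨lamN r - 1, hlt⟩).mpr (show lamN r - 1 < lamN r by omega)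
            have h2 : lamN r - 1 < i := this.2
            omega
        -- (b) i not among earlier w values
        have hbnd : ∀ s, s < r → auxW lamN s ≠ i := by
          intro s hs hsi
          have hsn : s < n := lt_trans hs hr
          have hIH := IH s hs hsn
          have : (σ'.symm ⟨s, hsn⟩ : ℕ) = auxW lamN s := congrArg Fin.val hIH
          have heq : σ'.symm ⟨s, hsn⟩ = σ'.symm ⟨r, hr⟩ := Fin.ext (by omega)
          have := σ'.symm.injective heq
          have : s = r := congrArg Fin.val this
          omega
        have hwle : auxW lamN r ≤ i := auxW_min ha hbnd
        -- (c) i ≤ w r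
        have hile : i ≤ auxW lamN r := by
          by_contra hgt
          push_neg at hgt
          have hwn : auxW lamN r < n := hw_lt r hr
          set cc : Fin n := ⟨auxW lamN r, hwn⟩ with hcc
          have hnot : ¬ ((⟨r, hr⟩ : Fin n) < σ' cc ∧ (cc : ℕ) < i) := by
            rw [hcond cc]
            show ¬ (auxW lamN r < lamN r)
            have := auxW_ge lamN r
            omega
          have hc2 : (cc : ℕ) < i := hgt
          have hnlt : ¬ ((⟨r, hr⟩ : Fin n) < σ' cc) := fun h => hnot ⟨h, hc2⟩
          push_neg at hnlt
          rcases lt_or_eq_of_le hnlt with hlt | heq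
          · -- σ' cc < r
            set s := σ' cc with hs2
            have hsr : (s : ℕ) < r := hlt
            have hIH := IH (s : ℕ) hsr s.2
            have h1 : σ'.symm s = cc := σ'.symm_apply_apply cc
            have h2 : σ'.symm ⟨(s : ℕ), s.2⟩ = σ'.symm s := by congr 1
            have h3 : auxW lamN (s : ℕ) = (cc : ℕ) := by
              have := congrArg Fin.val hIH
              rw [h2, h1] at this
              exact this.symm
            exact auxW_ne hsr (show auxW lamN (s : ℕ) = auxW lamN r from h3)
          · -- σ' cc = r gives cc = σ'.symm r, so auxW r = i, contra hgt
            have : σ'.symm ⟨r, hr⟩ = cc := by rw [← heq]; exact σ'.symm_apply_apply cc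
            have : i = (cc : ℕ) := congrArg Fin.val this
            omega
        exact Fin.ext (show i = auxW lamN r by omega)
    have hsymm : σ'.symm = e := by
      ext r
      have := key (r : ℕ) r.2
      have hrr : (⟨(r : ℕ), r.2⟩ : Fin n) = r := rfl
      rw [hrr] at this
      rw [this, heval]
    calc σ' = σ'.symm.symm := (Equiv.symm_symm σ').symm
      _ = e.symm := by rw [hsymm]
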